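/- Let α > 1 and let ψ : [0,∞) → [0,∞) be continuously differentiable with |ψ'(r)| ≤ 1 for all r > 0. Then for all x, c ∈ ℝ: ψ(|x + c|^α) − ψ(|x|^α) ≤ α(2^{α−2} + 1)(|x|^{α−1}|c| + |c|^α). -/

import Mathlib

open Set Real

/-- `(A+B)^p ≤ (2^(p-1)+1)(A^p+B^p)` for nonnegative reals and `p > 0`. -/
lemma add_rpow_le_aux (A B : ℝ) (hA : 0 ≤ A) (hB : 0 ≤ B) {p : ℝ} (hp : 0 < p) :
    (A + B) ^ p ≤ ((2:ℝ) ^ (p - 1) + 1) * (A ^ p + B ^ p) := by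
  have hsum : (0:ℝ) ≤ A ^ p + B ^ p :=
    add_nonneg (Real.rpow_nonneg hA p) (Real.rpow_nonneg hB p)
  have h2 : (0:ℝ) < (2:ℝ) ^ (p - 1) := Real.rpow_pos_of_pos two_pos _
  rcases le_or_gt p 1 with hp1 | hp1
  · have h := NNReal.rpow_add_le_add_rpow A.toNNReal B.toNNReal hp.le hp1
    rw [← NNReal.coe_le_coe] at h
    push_cast at h
    rw [Real.coe_toNNReal _ hA, Real.coe_toNNReal _ hB] at h
    calc (A + B) ^ p ≤ A ^ p + B ^ p := h
      _ = 1 * (A ^ p + B ^ p) := (one_mul _).symm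
      _ ≤ ((2:ℝ) ^ (p - 1) + 1) * (A ^ p + B ^ p) := by
          apply mul_le_mul_of_nonneg_right _ hsum; linarith
  · have h := NNReal.rpow_add_le_mul_rpow_add_rpow A.toNNReal B.toNNReal hp1.le
    rw [← NNReal.coe_le_coe] at h
    push_cast at h
    rw [Real.coe_toNNReal _ hA, Real.coe_toNNReal _ hB] at h
    calc (A + B) ^ p ≤ (2:ℝ) ^ (p - 1) * (A ^ p + B ^ p) := h
      _ ≤ ((2:ℝ) ^ (p - 1) + 1) * (A ^ p + B ^ p) := by
          apply mul_le_mul_of_nonneg_right _ hsum; linarith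

/-- Case II jump estimate: if `α > 1` and `ψ` is continuously differentiable
with `|ψ'(r)| ≤ 1` for `r > 0`, then
`ψ(|x+c|^α) − ψ(|x|^α) ≤ α(2^{α−2}+1)(|x|^{α−1}|c| + |c|^α)`. -/
theorem jump_estimate_case_two
    (α : ℝ) (hα : 1 < α)
    (ψ : ℝ → ℝ) (hψ : ContDiff ℝ 1 ψ)
    (hψ' : ∀ r > (0:ℝ), |deriv ψ r| ≤ 1) :
    ∀ x c : ℝ,
      ψ (|x + c| ^ α) - ψ (|x| ^ α)
        ≤ α * ((2:ℝ) ^ (α - 2) + 1) * (|x| ^ (α - 1) * |c| + |c| ^ α) := by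
  intro x c
  set A := |x| with hA
  set C := |c| with hC
  have hA0 : 0 ≤ A := abs_nonneg _
  have hC0 : 0 ≤ C := abs_nonneg _
  have hα0 : 0 < α := lt_trans one_pos hα
  -- ψ is 1-Lipschitz on [0, ∞)
  have hdψ : ∀ r : ℝ, DifferentiableAt ℝ ψ r := fun r =>
    (hψ.differentiable one_ne_zero) r
  have hcont : Continuous (deriv ψ) := hψ.continuous_deriv le_rfl
  have hbound : ∀ r ∈ Ici (0:ℝ), ‖deriv ψ r‖ ≤ 1 := by
    intro r hr
    rcases eq_or_lt_of_le (mem_Ici.mp hr) with h | h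
    · have ht : Filter.Tendsto (fun s => |deriv ψ s|) (nhdsWithin 0 (Ioi 0)) (nhds |deriv ψ 0|) :=
        ((hcont.abs.tendsto 0).mono_left nhdsWithin_le_nhds)
      have : |deriv ψ 0| ≤ 1 :=
        le_of_tendsto ht (Filter.eventually_of_mem self_mem_nhdsWithin fun s hs => hψ' s hs)
      rw [← h]; simpa using this
    · simpa using hψ' r h
  have hlip : ∀ u ∈ Ici (0:ℝ), ∀ v ∈ Ici (0:ℝ), |ψ u - ψ v| ≤ |u - v| := by
    intro u hu v hv
    have := (convex_Ici (0:ℝ)).norm_image_sub_le_of_norm_deriv_le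
      (fun r _ => hdψ r) hbound hv hu
    simpa using this
  -- the rpow map estimate via MVT on [0, A+C]
  set M := A + C with hM
  have hM0 : 0 ≤ M := add_nonneg hA0 hC0
  have haM : |x + c| ∈ Icc 0 M := ⟨abs_nonneg _, (abs_add_le x c)⟩
  have hAM : A ∈ Icc 0 M := ⟨hA0, le_add_of_nonneg_right hC0⟩
  have hrd : ∀ r : ℝ, DifferentiableAt ℝ (fun s : ℝ => s ^ α) r := fun r =>
    (Real.hasDerivAt_rpow_const (Or.inr hα.le)).differentiableAt
  have hrbound : ∀ r ∈ Icc (0:ℝ) M, ‖deriv (fun s : ℝ => s ^ α) r‖ ≤ α * M ^ (α - 1) := by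
    intro r hr
    rw [(Real.hasDerivAt_rpow_const (Or.inr hα.le)).deriv]
    rw [Real.norm_eq_abs, abs_mul, abs_of_pos hα0,
      abs_of_nonneg (Real.rpow_nonneg hr.1 _)]
    exact mul_le_mul_of_nonneg_left
      (Real.rpow_le_rpow hr.1 hr.2 (by linarith)) hα0.le
  have hmvt : |(|x + c|) ^ α - A ^ α| ≤ α * M ^ (α - 1) * C := by
    have h := (convex_Icc (0:ℝ) M).norm_image_sub_le_of_norm_deriv_le
      (fun r _ => hrd r) hrbound hAM haM
    simp only [Real.norm_eq_abs] at h
    refine h.trans ?_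
    apply mul_le_mul_of_nonneg_left _ (by positivity)
    calc |(|x + c|) - A| ≤ |x + c - x| := abs_abs_sub_abs_le_abs_sub _ _
      _ = C := by rw [hC]; ring_nf
  -- combine
  have h1 : ψ (|x + c| ^ α) - ψ (A ^ α) ≤ α * M ^ (α - 1) * C := by
    calc ψ (|x + c| ^ α) - ψ (A ^ α) ≤ |ψ (|x + c| ^ α) - ψ (A ^ α)| := le_abs_self _
      _ ≤ |(|x + c|) ^ α - A ^ α| :=
          hlip _ (Real.rpow_nonneg (abs_nonneg _) _) _ (Real.rpow_nonneg hA0 _)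
      _ ≤ α * M ^ (α - 1) * C := hmvt
  refine h1.trans ?_
  have hkey : M ^ (α - 1) ≤ ((2:ℝ) ^ (α - 2) + 1) * (A ^ (α - 1) + C ^ (α - 1)) := by
    have := add_rpow_le_aux A C hA0 hC0 (p := α - 1) (by linarith)
    simpa [show α - 1 - 1 = α - 2 by ring] using this
  have hCα : C ^ (α - 1) * C = C ^ α := by
    rcases eq_or_lt_of_le hC0 with h0 | h0
    · rw [← h0, mul_zero, Real.zero_rpow hα0.ne']
    · rw [← Real.rpow_add_one h0.ne', sub_add_cancel]
  calc α * M ^ (α - 1) * C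
      ≤ α * (((2:ℝ) ^ (α - 2) + 1) * (A ^ (α - 1) + C ^ (α - 1))) * C := by
        apply mul_le_mul_of_nonneg_right _ hC0
        exact mul_le_mul_of_nonneg_left hkey hα0.le
    _ = α * ((2:ℝ) ^ (α - 2) + 1) * (A ^ (α - 1) * C + C ^ (α - 1) * C) := by ring
    _ = α * ((2:ℝ) ^ (α - 2) + 1) * (A ^ (α - 1) * C + C ^ α) := by rw [hCα]
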